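/- Let p be a prime. The map α : K_p → (ℕ → ZMod p), g ↦ (α_0(g), α_1(g), α_2(g), …), is a surjective group homomorphism from K_p onto the additive group of all sequences over ZMod p, and its kernel equals the commutator subgroup of K_p. Hence α is the abelianization epimorphism K_p → K_p/[K_p, K_p] ≅ (ZMod p)^ℕ. -/

import Mathlib

/-- Extend a word `v ∈ (ZMod p)^n` to an infinite sequence by zeros. -/
def extendWord {p : ℕ} (n : ℕ) (v : Fin n → ZMod p) : ℕ → ZMod p :=
  fun i => if h : i < n then v ⟨i, h⟩ else 0

/-- The triangular-form predicate defining the group `K_p`: `g` has a tableau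
`(a_n)` with `(g x)_n = x_n + a_n(x_0, …, x_{n−1})`. -/
def IsTriangular (p : ℕ) (g : Equiv.Perm (ℕ → ZMod p)) : Prop :=
  ∃ a : (n : ℕ) → (Fin n → ZMod p) → ZMod p,
    ∀ (x : ℕ → ZMod p) (n : ℕ), g x n = x n + a n (fun i : Fin n => x (i : ℕ))

/-- `α_n(g) = Σ_{v ∈ (ZMod p)^n} a_n(v)`, computed from the action of `g`
(for triangular `g`, `a_n(v) = (g x̂)_n − x̂_n` for any extension `x̂` of `v`). -/
noncomputable def alphaKal (p : ℕ) [NeZero p] (g : Equiv.Perm (ℕ → ZMod p)) (n : ℕ) :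
    ZMod p :=
  ∑ v : Fin n → ZMod p, (g (extendWord n v) n - extendWord n v n)

open scoped commutatorElement

namespace Kal

variable {p : ℕ}

lemma extendWord_lt {n : ℕ} (v : Fin n → ZMod p) {k : ℕ} (hk : k < n) :
    extendWord n v k = v ⟨k, hk⟩ := dif_pos hk

lemma extendWord_self {n : ℕ} (v : Fin n → ZMod p) : extendWord n v n = 0 :=
  dif_neg (lt_irrefl n)

lemma restrict_extend {n : ℕ} (v : Fin n → ZMod p) :
    (fun i : Fin n => extendWord n v (i : ℕ)) = v := by
  funext i
  simp [extendWord]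

lemma tri_prefix {g : Equiv.Perm (ℕ → ZMod p)} (hg : IsTriangular p g)
    {x y : ℕ → ZMod p} {n : ℕ} (h : ∀ k, k < n → x k = y k) :
    ∀ k, k < n → g x k = g y k := by
  obtain ⟨a, ha⟩ := hg
  intro k hk
  rw [ha, ha, h k hk]
  have h2 : (fun i : Fin k => x (i : ℕ)) = fun i : Fin k => y (i : ℕ) :=
    funext fun i => h i (i.isLt.trans hk)
  rw [h2]

lemma tri_symm_apply {g : Equiv.Perm (ℕ → ZMod p)}
    (a : (n : ℕ) → (Fin n → ZMod p) → ZMod p)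
    (ha : ∀ (x : ℕ → ZMod p) (n : ℕ), g x n = x n + a n (fun i : Fin n => x (i : ℕ)))
    (z : ℕ → ZMod p) (k : ℕ) :
    g.symm z k = z k - a k (fun i : Fin k => g.symm z (i : ℕ)) := by
  have h := ha (g.symm z) k
  rw [g.apply_symm_apply] at h
  rw [h]; ring

lemma tri_symm_prefix {g : Equiv.Perm (ℕ → ZMod p)} (hg : IsTriangular p g)
    {x y : ℕ → ZMod p} {n : ℕ} (h : ∀ k, k < n → x k = y k) :
    ∀ k, k < n → g.symm x k = g.symm y k := by
  obtain ⟨a, ha⟩ := hg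
  intro k
  induction k using Nat.strong_induction_on with
  | _ k ih =>
    intro hk
    rw [tri_symm_apply a ha, tri_symm_apply a ha, h k hk]
    have h2 : (fun i : Fin k => g.symm x (i : ℕ)) = fun i : Fin k => g.symm y (i : ℕ) :=
      funext fun i => ih i i.isLt (i.isLt.trans hk)
    rw [h2]

lemma tri_one : IsTriangular p 1 :=
  ⟨fun _ _ => 0, fun x n => by simp⟩

lemma tri_mul {g h : Equiv.Perm (ℕ → ZMod p)} (hg : IsTriangular p g)
    (hh : IsTriangular p h) : IsTriangular p (g * h) := by
  obtain ⟨a, ha⟩ := hg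
  obtain ⟨b, hb⟩ := hh
  refine ⟨fun n v => b n v + a n (fun i =>
    v i + b i (fun j : Fin (i : ℕ) => v ⟨j.1, j.2.trans i.2⟩)), fun x n => ?_⟩
  have h1 : (g * h) x n = h x n + a n (fun i : Fin n => h x (i : ℕ)) := by
    rw [Equiv.Perm.mul_apply]; exact ha (h x) n
  have h2 : (fun i : Fin n => h x (i : ℕ)) =
      fun i : Fin n => x (i : ℕ) + b (i : ℕ) (fun j : Fin (i : ℕ) => x (j : ℕ)) :=
    funext fun i => hb x i
  rw [h1, h2, hb x n]
  ring

lemma tri_inv {g : Equiv.Perm (ℕ → ZMod p)} (hg : IsTriangular p g) :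
    IsTriangular p g⁻¹ := by
  obtain ⟨a, ha⟩ := hg
  refine ⟨fun n v => g.symm (extendWord n v) n, fun x n => ?_⟩
  have hpre : ∀ k, k < n →
      g.symm (extendWord n (fun i : Fin n => x (i : ℕ))) k = g.symm x k := by
    refine tri_symm_prefix ⟨a, ha⟩ (fun k hk => ?_)
    rw [extendWord_lt _ hk]
  show g.symm x n = x n + g.symm (extendWord n fun i : Fin n => x (i : ℕ)) n
  rw [tri_symm_apply a ha x n, tri_symm_apply a ha (extendWord n fun i : Fin n => x (i : ℕ)) n,
    extendWord_self]
  have h2 : (fun i : Fin n => g.symm (extendWord n fun i : Fin n => x (i : ℕ)) (i : ℕ)) =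
      fun i : Fin n => g.symm x (i : ℕ) := funext fun i => hpre i i.isLt
  rw [h2]
  ring

def Kgrp (p : ℕ) : Subgroup (Equiv.Perm (ℕ → ZMod p)) where
  carrier := {g | IsTriangular p g}
  one_mem' := tri_one
  mul_mem' := fun hg hh => tri_mul hg hh
  inv_mem' := fun hg => tri_inv hg

variable [NeZero p]

lemma alphaKal_eq_sum {g : Equiv.Perm (ℕ → ZMod p)}
    (a : (n : ℕ) → (Fin n → ZMod p) → ZMod p)
    (ha : ∀ (x : ℕ → ZMod p) (n : ℕ), g x n = x n + a n (fun i : Fin n => x (i : ℕ)))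
    (n : ℕ) : alphaKal p g n = ∑ v : Fin n → ZMod p, a n v := by
  unfold alphaKal
  refine Finset.sum_congr rfl fun v _ => ?_
  rw [ha, restrict_extend, extendWord_self]
  ring

lemma alphaKal_one (n : ℕ) : alphaKal p 1 n = 0 := by
  unfold alphaKal; simp

lemma alphaKal_mul {g h : Equiv.Perm (ℕ → ZMod p)} (hg : IsTriangular p g)
    (hh : IsTriangular p h) (n : ℕ) :
    alphaKal p (g * h) n = alphaKal p g n + alphaKal p h n := by
  obtain ⟨a, ha⟩ := hg
  set T : (Fin n → ZMod p) → (Fin n → ZMod p) :=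
    fun v => fun i : Fin n => h (extendWord n v) (i : ℕ) with hT
  have hTinj : Function.Injective T := by
    intro v w hvw
    have h1 : ∀ k, k < n → h (extendWord n v) k = h (extendWord n w) k := fun k hk =>
      congrFun hvw ⟨k, hk⟩
    have h2 : ∀ k, k < n → extendWord n v k = extendWord n w k := by
      intro k hk
      have h3 := tri_symm_prefix hh h1 k hk
      rwa [Equiv.symm_apply_apply, Equiv.symm_apply_apply] at h3
    funext i
    have := h2 i i.isLt
    rwa [extendWord_lt _ i.isLt, extendWord_lt _ i.isLt] at this
  have hTbij : Function.Bijective T := Finite.injective_iff_bijective.mp hTinj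
  have key : ∀ v : Fin n → ZMod p,
      g (h (extendWord n v)) n - extendWord n v n =
      a n (T v) + (h (extendWord n v) n - extendWord n v n) := by
    intro v
    rw [ha (h (extendWord n v)) n]
    ring
  calc alphaKal p (g * h) n
      = ∑ v : Fin n → ZMod p, (a n (T v) + (h (extendWord n v) n - extendWord n v n)) := by
        unfold alphaKal
        refine Finset.sum_congr rfl fun v _ => ?_
        rw [Equiv.Perm.mul_apply]
        exact key v
    _ = (∑ v : Fin n → ZMod p, a n (T v)) + alphaKal p h n := by
        rw [Finset.sum_add_distrib]; rfl
    _ = alphaKal p g n + alphaKal p h n := by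
        rw [hTbij.sum_comp (a n), alphaKal_eq_sum a ha]

end Kal

namespace Kal

variable {p : ℕ}

/-- Agreement of permutations on the first `n` coordinates. -/
def E (n : ℕ) (g g' : Equiv.Perm (ℕ → ZMod p)) : Prop :=
  ∀ (x : ℕ → ZMod p) (k : ℕ), k < n → g x k = g' x k

lemma E_refl (n : ℕ) (g : Equiv.Perm (ℕ → ZMod p)) : E n g g := fun _ _ _ => rfl

lemma E_symm {n : ℕ} {g g' : Equiv.Perm (ℕ → ZMod p)} (e : E n g g') : E n g' g :=
  fun x k hk => (e x k hk).symm

lemma E_trans {n : ℕ} {g g' g'' : Equiv.Perm (ℕ → ZMod p)} (e1 : E n g g')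
    (e2 : E n g' g'') : E n g g'' := fun x k hk => (e1 x k hk).trans (e2 x k hk)

lemma E_mono {n m : ℕ} {g g' : Equiv.Perm (ℕ → ZMod p)} (h : m ≤ n) (e : E n g g') :
    E m g g' := fun x k hk => e x k (hk.trans_le h)

lemma E_mul {n : ℕ} {g g' h h' : Equiv.Perm (ℕ → ZMod p)} (hg : IsTriangular p g)
    (e1 : E n g g') (e2 : E n h h') : E n (g * h) (g' * h') := by
  intro x k hk
  rw [Equiv.Perm.mul_apply, Equiv.Perm.mul_apply]
  rw [tri_prefix hg (fun j hj => e2 x j hj) k hk]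
  exact e1 (h' x) k hk

lemma E_inv {n : ℕ} {g g' : Equiv.Perm (ℕ → ZMod p)} (hg' : IsTriangular p g')
    (e : E n g g') : E n g⁻¹ g'⁻¹ := by
  intro x k hk
  have hgu : g (g⁻¹ x) = x := g.apply_symm_apply x
  have hx : ∀ j, j < n → x j = g' (g⁻¹ x) j := fun j hj => by
    conv_lhs => rw [← hgu]
    exact e (g⁻¹ x) j hj
  have h2 := tri_symm_prefix hg' hx k hk
  rw [Equiv.symm_apply_apply] at h2
  rw [← Equiv.Perm.inv_def] at h2
  exact h2.symm

/-! ### Permutation from a tableau -/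

def tabFun (a : (n : ℕ) → (Fin n → ZMod p) → ZMod p) (x : ℕ → ZMod p) : ℕ → ZMod p :=
  fun n => x n + a n (fun i : Fin n => x (i : ℕ))

def tabInv (a : (n : ℕ) → (Fin n → ZMod p) → ZMod p) (y : ℕ → ZMod p) : ℕ → ZMod p
  | n => y n - a n (fun i : Fin n => tabInv a y (i : ℕ))
termination_by n => n
decreasing_by exact i.isLt

lemma tabInv_def (a : (n : ℕ) → (Fin n → ZMod p) → ZMod p) (y : ℕ → ZMod p) (n : ℕ) :
    tabInv a y n = y n - a n (fun i : Fin n => tabInv a y (i : ℕ)) := by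
  conv_lhs => rw [tabInv]

def tabPerm (a : (n : ℕ) → (Fin n → ZMod p) → ZMod p) : Equiv.Perm (ℕ → ZMod p) where
  toFun := tabFun a
  invFun := tabInv a
  left_inv := by
    intro x; funext n
    induction n using Nat.strong_induction_on with
    | _ n ih =>
      rw [tabInv_def]
      have h2 : (fun i : Fin n => tabInv a (tabFun a x) (i : ℕ)) = fun i : Fin n => x (i : ℕ) :=
        funext fun i => ih i i.isLt
      rw [h2]
      have h3 : tabFun a x n = x n + a n (fun i : Fin n => x (i : ℕ)) := rfl
      rw [h3]; ring
  right_inv := by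
    intro y; funext n
    show tabInv a y n + a n (fun i : Fin n => tabInv a y (i : ℕ)) = y n
    rw [tabInv_def]; ring

lemma tri_tabPerm (a : (n : ℕ) → (Fin n → ZMod p) → ZMod p) : IsTriangular p (tabPerm a) :=
  ⟨a, fun _ _ => rfl⟩

lemma eq_tabPerm {g : Equiv.Perm (ℕ → ZMod p)} (a : (n : ℕ) → (Fin n → ZMod p) → ZMod p)
    (ha : ∀ (x : ℕ → ZMod p) (n : ℕ), g x n = x n + a n (fun i : Fin n => x (i : ℕ))) :
    g = tabPerm a :=
  Equiv.ext fun x => funext fun n => ha x n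

lemma E_tabPerm {n : ℕ} {a a' : (n : ℕ) → (Fin n → ZMod p) → ZMod p}
    (hagree : ∀ k, k < n → a k = a' k) : E n (tabPerm a) (tabPerm a') := by
  intro x k hk
  show x k + a k _ = x k + a' k _
  rw [hagree k hk]

/-! ### cons / tail / base / sigma / sections -/

def consSeq (i : ZMod p) (t : ℕ → ZMod p) : ℕ → ZMod p :=
  fun k => match k with
  | 0 => i
  | (k + 1) => t k

def tailSeq (x : ℕ → ZMod p) : ℕ → ZMod p := fun k => x (k + 1)

@[simp] lemma consSeq_zero (i : ZMod p) (t : ℕ → ZMod p) : consSeq i t 0 = i := rfl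

@[simp] lemma consSeq_succ (i : ZMod p) (t : ℕ → ZMod p) (k : ℕ) :
    consSeq i t (k + 1) = t k := rfl

@[simp] lemma tailSeq_consSeq (i : ZMod p) (t : ℕ → ZMod p) : tailSeq (consSeq i t) = t :=
  funext fun _ => rfl

@[simp] lemma consSeq_eta (x : ℕ → ZMod p) : consSeq (x 0) (tailSeq x) = x :=
  funext fun k => by cases k <;> rfl

def basePerm (f : ZMod p → Equiv.Perm (ℕ → ZMod p)) : Equiv.Perm (ℕ → ZMod p) where
  toFun x := consSeq (x 0) (f (x 0) (tailSeq x))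
  invFun x := consSeq (x 0) ((f (x 0)).symm (tailSeq x))
  left_inv x := by
    simp only [consSeq_zero, tailSeq_consSeq, Equiv.symm_apply_apply, consSeq_eta]
  right_inv x := by
    simp only [consSeq_zero, tailSeq_consSeq, Equiv.apply_symm_apply, consSeq_eta]

lemma basePerm_apply (f : ZMod p → Equiv.Perm (ℕ → ZMod p)) (x : ℕ → ZMod p) :
    basePerm f x = consSeq (x 0) (f (x 0) (tailSeq x)) := rfl

lemma basePerm_inv_apply (f : ZMod p → Equiv.Perm (ℕ → ZMod p)) (x : ℕ → ZMod p) :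
    (basePerm f)⁻¹ x = consSeq (x 0) ((f (x 0))⁻¹ (tailSeq x)) := rfl

lemma tri_base {f : ZMod p → Equiv.Perm (ℕ → ZMod p)} (hf : ∀ i, IsTriangular p (f i)) :
    IsTriangular p (basePerm f) := by
  choose a ha using hf
  refine ⟨fun n => match n with
    | 0 => fun _ => 0
    | (k + 1) => fun v => a (v 0) k (fun j : Fin k => v j.succ), fun x n => ?_⟩
  cases n with
  | zero => show x 0 = x 0 + 0; ring
  | succ k =>
    show f (x 0) (tailSeq x) k = x (k + 1) + _
    rw [ha (x 0) (tailSeq x) k]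
    rfl

def sigmaPerm (p : ℕ) : Equiv.Perm (ℕ → ZMod p) where
  toFun x := consSeq (x 0 + 1) (tailSeq x)
  invFun x := consSeq (x 0 - 1) (tailSeq x)
  left_inv x := by
    funext k
    cases k with
    | zero => show x 0 + 1 - 1 = x 0; ring
    | succ k => rfl
  right_inv x := by
    funext k
    cases k with
    | zero => show x 0 - 1 + 1 = x 0; ring
    | succ k => rfl

lemma tri_sigma : IsTriangular p (sigmaPerm p) := by
  refine ⟨fun n => match n with
    | 0 => fun _ => 1
    | (k + 1) => fun _ => 0, fun x n => ?_⟩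
  cases n with
  | zero => rfl
  | succ k => show x (k + 1) = x (k + 1) + 0; ring

lemma sigmaPerm_apply (x : ℕ → ZMod p) : sigmaPerm p x = consSeq (x 0 + 1) (tailSeq x) := rfl

lemma sigmaPerm_inv_apply (x : ℕ → ZMod p) :
    (sigmaPerm p)⁻¹ x = consSeq (x 0 - 1) (tailSeq x) := rfl

lemma symm_fix0 {g : Equiv.Perm (ℕ → ZMod p)} (h0 : ∀ x, g x 0 = x 0) (x : ℕ → ZMod p) :
    g.symm x 0 = x 0 := by
  conv_rhs => rw [← g.apply_symm_apply x, h0]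

def secPerm (g : Equiv.Perm (ℕ → ZMod p)) (h0 : ∀ x, g x 0 = x 0) (i : ZMod p) :
    Equiv.Perm (ℕ → ZMod p) where
  toFun t := tailSeq (g (consSeq i t))
  invFun t := tailSeq (g.symm (consSeq i t))
  left_inv t := by
    have h1 : consSeq i (tailSeq (g (consSeq i t))) = g (consSeq i t) := by
      have h2 : g (consSeq i t) 0 = i := by rw [h0]; rfl
      conv_rhs => rw [← consSeq_eta (g (consSeq i t))]
      rw [h2]
    show tailSeq (g.symm (consSeq i (tailSeq (g (consSeq i t))))) = t
    rw [h1, Equiv.symm_apply_apply, tailSeq_consSeq]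
  right_inv t := by
    have h1 : consSeq i (tailSeq (g.symm (consSeq i t))) = g.symm (consSeq i t) := by
      have h2 : g.symm (consSeq i t) 0 = i := by rw [symm_fix0 h0]; rfl
      conv_rhs => rw [← consSeq_eta (g.symm (consSeq i t))]
      rw [h2]
    show tailSeq (g (consSeq i (tailSeq (g.symm (consSeq i t))))) = t
    rw [h1, Equiv.apply_symm_apply, tailSeq_consSeq]

lemma secPerm_apply (g : Equiv.Perm (ℕ → ZMod p)) (h0 : ∀ x, g x 0 = x 0) (i : ZMod p)
    (t : ℕ → ZMod p) : secPerm g h0 i t = tailSeq (g (consSeq i t)) := rfl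

lemma sec_spec {g : Equiv.Perm (ℕ → ZMod p)} (h0 : ∀ x, g x 0 = x 0) (x : ℕ → ZMod p)
    (k : ℕ) : secPerm g h0 (x 0) (tailSeq x) k = g x (k + 1) := by
  show tailSeq (g (consSeq (x 0) (tailSeq x))) k = g x (k + 1)
  rw [consSeq_eta]
  rfl

lemma tri_sec {g : Equiv.Perm (ℕ → ZMod p)} (hg : IsTriangular p g)
    (h0 : ∀ x, g x 0 = x 0) (i : ZMod p) : IsTriangular p (secPerm g h0 i) := by
  obtain ⟨a, ha⟩ := hg
  refine ⟨fun k w => a (k + 1) (Fin.cons i w), fun t k => ?_⟩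
  show g (consSeq i t) (k + 1) = t k + _
  rw [ha (consSeq i t) (k + 1)]
  have h2 : (fun j : Fin (k + 1) => consSeq i t (j : ℕ)) =
      Fin.cons i (fun j : Fin k => t (j : ℕ)) := by
    funext j
    refine Fin.cases ?_ ?_ j
    · rfl
    · intro j'
      rw [Fin.cons_succ]
      rfl
  rw [h2]
  rfl

lemma consSeq_extendWord (i : ZMod p) (k : ℕ) (w : Fin k → ZMod p) :
    consSeq i (extendWord k w) = extendWord (k + 1) (Fin.cons i w) := by
  funext m
  cases m with
  | zero =>
    show i = extendWord (k + 1) (Fin.cons i w) 0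
    rw [extendWord_lt _ (Nat.succ_pos k)]
    rfl
  | succ m =>
    show extendWord k w m = extendWord (k + 1) (Fin.cons i w) (m + 1)
    by_cases hm : m < k
    · rw [extendWord_lt _ hm, extendWord_lt _ (Nat.succ_lt_succ hm)]
      exact (Fin.cons_succ (α := fun _ : Fin (k+1) => ZMod p) (x := i) (p := w) (i := ⟨m, hm⟩)).symm
    · unfold extendWord
      rw [dif_neg hm, dif_neg (by omega)]

variable [NeZero p]

lemma alphaKal_sec_sum {g : Equiv.Perm (ℕ → ZMod p)}
    (h0 : ∀ x, g x 0 = x 0) (k : ℕ) :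
    alphaKal p g (k + 1) = ∑ i : ZMod p, alphaKal p (secPerm g h0 i) k := by
  have key : ∀ (i : ZMod p) (w : Fin k → ZMod p),
      secPerm g h0 i (extendWord k w) k - extendWord k w k
        = g (extendWord (k + 1) (Fin.cons i w)) (k + 1)
          - extendWord (k + 1) (Fin.cons i w) (k + 1) := by
    intro i w
    rw [extendWord_self, extendWord_self]
    show tailSeq (g (consSeq i (extendWord k w))) k - 0 = _
    rw [consSeq_extendWord]
    rfl
  unfold alphaKal
  rw [← (Fintype.sum_equiv (Fin.consEquiv fun _ : Fin (k + 1) => ZMod p)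
      (fun x : ZMod p × (Fin k → ZMod p) =>
        g (extendWord (k + 1) (Fin.cons x.1 x.2)) (k + 1)
          - extendWord (k + 1) (Fin.cons x.1 x.2) (k + 1))
      (fun v => g (extendWord (k + 1) v) (k + 1) - extendWord (k + 1) v (k + 1))
      (fun x => rfl)),
    Fintype.sum_prod_type]
  refine Finset.sum_congr rfl fun i _ => ?_
  refine Finset.sum_congr rfl fun w _ => ?_
  exact (key i w).symm

end Kal

namespace Kal

variable {p : ℕ}

lemma tri_comm {u v : Equiv.Perm (ℕ → ZMod p)} (hu : IsTriangular p u)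
    (hv : IsTriangular p v) : IsTriangular p ⁅u, v⁆ := by
  rw [commutatorElement_def]
  exact tri_mul (tri_mul (tri_mul hu hv) (tri_inv hu)) (tri_inv hv)

def prodUpTo (s : ZMod p → Equiv.Perm (ℕ → ZMod p)) : ℕ → Equiv.Perm (ℕ → ZMod p)
  | 0 => 1
  | (m + 1) => s ((m + 1 : ℕ) : ZMod p) * prodUpTo s m

lemma tri_prodUpTo {s : ZMod p → Equiv.Perm (ℕ → ZMod p)} (hs : ∀ i, IsTriangular p (s i))
    (m : ℕ) : IsTriangular p (prodUpTo s m) := by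
  induction m with
  | zero => exact tri_one
  | succ m ih => exact tri_mul (hs _) ih

def bChain (y s : ZMod p → Equiv.Perm (ℕ → ZMod p)) : ℕ → Equiv.Perm (ℕ → ZMod p)
  | 0 => 1
  | (m + 1) => (y ((m + 1 : ℕ) : ZMod p))⁻¹ * s ((m + 1 : ℕ) : ZMod p) * bChain y s m

lemma tri_bChain {y s : ZMod p → Equiv.Perm (ℕ → ZMod p)} (hy : ∀ i, IsTriangular p (y i))
    (hs : ∀ i, IsTriangular p (s i)) (m : ℕ) : IsTriangular p (bChain y s m) := by
  induction m with
  | zero => exact tri_one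
  | succ m ih => exact tri_mul (tri_mul (tri_inv (hy _)) (hs _)) ih

lemma basePerm_mul (f f' : ZMod p → Equiv.Perm (ℕ → ZMod p)) :
    basePerm f * basePerm f' = basePerm (fun i => f i * f' i) := by
  refine Equiv.ext fun x => ?_
  rw [Equiv.Perm.mul_apply, basePerm_apply, basePerm_apply, basePerm_apply, consSeq_zero,
    tailSeq_consSeq, Equiv.Perm.mul_apply]

lemma basePerm_inv (f : ZMod p → Equiv.Perm (ℕ → ZMod p)) :
    (basePerm f)⁻¹ = basePerm (fun i => (f i)⁻¹) :=
  Equiv.ext fun x => rfl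

lemma basePerm_commutator (f f' : ZMod p → Equiv.Perm (ℕ → ZMod p)) :
    ⁅basePerm f, basePerm f'⁆ = basePerm (fun i => ⁅f i, f' i⁆) := by
  rw [commutatorElement_def, basePerm_inv, basePerm_inv, basePerm_mul, basePerm_mul,
    basePerm_mul]
  simp only [commutatorElement_def]

variable [NeZero p]

lemma alphaKal_prodUpTo {s : ZMod p → Equiv.Perm (ℕ → ZMod p)}
    (hs : ∀ i, IsTriangular p (s i)) (m k : ℕ) :
    alphaKal p (prodUpTo s m) k
      = ∑ j ∈ Finset.range m, alphaKal p (s ((j + 1 : ℕ) : ZMod p)) k := by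
  induction m with
  | zero => rw [Finset.sum_range_zero]; exact alphaKal_one k
  | succ m ih =>
    rw [prodUpTo, alphaKal_mul (hs _) (tri_prodUpTo hs m), ih, Finset.sum_range_succ]
    ring

lemma sum_zmod (F : ZMod p → ZMod p) :
    F 0 + ∑ j ∈ Finset.range (p - 1), F ((j + 1 : ℕ) : ZMod p) = ∑ i : ZMod p, F i := by
  have hppos : 0 < p := Nat.pos_of_ne_zero (NeZero.ne p)
  have h1 : ∑ j ∈ Finset.range (p - 1), F ((j + 1 : ℕ) : ZMod p)
      = ∑ i ∈ Finset.univ.erase (0 : ZMod p), F i := by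
    refine Finset.sum_nbij' (fun j => ((j + 1 : ℕ) : ZMod p)) (fun i => i.val - 1)
      ?_ ?_ ?_ ?_ ?_
    · intro a ha
      rw [Finset.mem_range] at ha
      refine Finset.mem_erase.mpr ⟨?_, Finset.mem_univ _⟩
      intro h0
      rw [ZMod.natCast_eq_zero_iff] at h0
      exact absurd (Nat.le_of_dvd (Nat.succ_pos a) h0) (by omega)
    · intro i hi
      have h2 : i.val ≠ 0 := fun hq =>
        (Finset.mem_erase.mp hi).1 ((ZMod.val_eq_zero i).mp hq)
      have h3 : i.val < p := ZMod.val_lt i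
      exact Finset.mem_range.mpr (by omega)
    · intro a ha
      rw [Finset.mem_range] at ha
      rw [ZMod.val_cast_of_lt (by omega : a + 1 < p)]
      omega
    · intro i hi
      have h2 : i.val ≠ 0 := fun hq =>
        (Finset.mem_erase.mp hi).1 ((ZMod.val_eq_zero i).mp hq)
      rw [show i.val - 1 + 1 = i.val from by omega]
      exact ZMod.natCast_rightInverse i
    · intro a _; rfl
  rw [h1, Finset.add_sum_erase _ F (Finset.mem_univ 0)]

theorem step (hp2 : 2 ≤ p) :
    ∀ (n : ℕ) (g : Equiv.Perm (ℕ → ZMod p)), IsTriangular p g →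
    (∀ k, k < n → alphaKal p g k = 0) →
    ∃ u v w z : Equiv.Perm (ℕ → ZMod p), IsTriangular p u ∧ IsTriangular p v ∧
      IsTriangular p w ∧ IsTriangular p z ∧ E n (⁅u, v⁆ * ⁅w, z⁆) g := by
  intro n
  induction n with
  | zero =>
    intro g _ _
    exact ⟨1, 1, 1, 1, tri_one, tri_one, tri_one, tri_one,
      fun x k hk => absurd hk (Nat.not_lt_zero k)⟩
  | succ n ih =>
    intro g hg hα
    have h0 : ∀ x, g x 0 = x 0 := by
      obtain ⟨a, ha⟩ := hg
      intro x
      have e1 : alphaKal p g 0 = a 0 (fun i : Fin 0 => x (i : ℕ)) := by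
        rw [alphaKal_eq_sum a ha 0, Fintype.sum_unique]
        exact congrArg (a 0) (Subsingleton.elim _ _)
      rw [ha x 0, ← e1, hα 0 (Nat.succ_pos n), add_zero]
    set s : ZMod p → Equiv.Perm (ℕ → ZMod p) := fun i => secPerm g h0 i with s_def
    have hs : ∀ i, IsTriangular p (s i) := fun i => tri_sec hg h0 i
    set h₂ : Equiv.Perm (ℕ → ZMod p) := prodUpTo s (p - 1) with h2_def
    have h₂tri : IsTriangular p h₂ := tri_prodUpTo hs _
    have hhtri : IsTriangular p (s 0 * h₂) := tri_mul (hs 0) h₂tri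
    have hαh : ∀ k, k < n → alphaKal p (s 0 * h₂) k = 0 := by
      intro k hk
      rw [alphaKal_mul (hs 0) h₂tri, h2_def, alphaKal_prodUpTo hs]
      calc alphaKal p (s 0) k
            + ∑ j ∈ Finset.range (p - 1), alphaKal p (s ((j + 1 : ℕ) : ZMod p)) k
          = ∑ i : ZMod p, alphaKal p (s i) k := sum_zmod (fun i => alphaKal p (s i) k)
        _ = alphaKal p g (k + 1) := (alphaKal_sec_sum h0 k).symm
        _ = 0 := hα (k + 1) (Nat.succ_lt_succ hk)
    obtain ⟨u, v, w, z, htu, htv, htw, htz, he⟩ := ih (s 0 * h₂) hhtri hαh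
    set w' : Equiv.Perm (ℕ → ZMod p) := h₂ * w * h₂⁻¹ with w'_def
    set z' : Equiv.Perm (ℕ → ZMod p) := h₂ * z * h₂⁻¹ with z'_def
    have hne : (-1 : ZMod p) ≠ 0 := by
      haveI : Fact (1 < p) := ⟨hp2⟩
      exact neg_ne_zero.mpr one_ne_zero
    set U0 : ZMod p → Equiv.Perm (ℕ → ZMod p) :=
      fun i => if i = 0 then u else if i = -1 then w' else 1 with U0_def
    set V0 : ZMod p → Equiv.Perm (ℕ → ZMod p) :=
      fun i => if i = 0 then v else if i = -1 then z' else 1 with V0_def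
    set yc : ZMod p → Equiv.Perm (ℕ → ZMod p) := fun i => ⁅U0 i, V0 i⁆ with yc_def
    have hU0 : ∀ i, IsTriangular p (U0 i) := by
      intro i
      simp only [U0_def]
      split_ifs
      exacts [htu, tri_mul (tri_mul h₂tri htw) (tri_inv h₂tri), tri_one]
    have hV0 : ∀ i, IsTriangular p (V0 i) := by
      intro i
      simp only [V0_def]
      split_ifs
      exacts [htv, tri_mul (tri_mul h₂tri htz) (tri_inv h₂tri), tri_one]
    have hyc : ∀ i, IsTriangular p (yc i) := fun i => tri_comm (hU0 i) (hV0 i)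
    set B : ZMod p → Equiv.Perm (ℕ → ZMod p) := fun i => bChain yc s (ZMod.val i) with B_def
    have hB : ∀ i, IsTriangular p (B i) := fun i => tri_bChain hyc hs _
    have hyc0 : yc 0 = ⁅u, v⁆ := by
      simp [yc_def, U0_def, V0_def]
    have hycm1 : yc (-1) = ⁅w', z'⁆ := by
      simp [yc_def, U0_def, V0_def, hne]
    have hchainEq : ∀ m, m ≤ p - 2 → bChain yc s m = prodUpTo s m := by
      intro m
      induction m with
      | zero => intro _; rfl
      | succ m ihm =>
        intro hm
        have hne0 : ((m + 1 : ℕ) : ZMod p) ≠ 0 := by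
          intro hq
          rw [ZMod.natCast_eq_zero_iff] at hq
          have := Nat.le_of_dvd (Nat.succ_pos m) hq
          omega
        have hnem1 : ((m + 1 : ℕ) : ZMod p) ≠ -1 := by
          intro hq
          have hq2 : ((m + 2 : ℕ) : ZMod p) = 0 := by
            push_cast
            push_cast at hq
            linear_combination hq
          rw [ZMod.natCast_eq_zero_iff] at hq2
          have := Nat.le_of_dvd (by omega) hq2
          omega
        have hyc1 : yc ((m + 1 : ℕ) : ZMod p) = 1 := by
          push_cast at hne0 hnem1
          push_cast [yc_def, U0_def, V0_def, hne0, hnem1]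
          simp [hne0, hnem1]
        rw [bChain, prodUpTo, hyc1, inv_one, one_mul, ihm (by omega)]
    have hBsucc : ∀ i : ZMod p, i ≠ 0 → yc i * B i * (B (i - 1))⁻¹ = s i := by
      intro i hi
      have hval : i.val ≠ 0 := fun hq => hi ((ZMod.val_eq_zero i).mp hq)
      obtain ⟨m, hm0⟩ := Nat.exists_eq_succ_of_ne_zero hval
      have hm : i.val = m + 1 := hm0
      have hmp : m + 1 < p := by
        have := ZMod.val_lt i
        omega
      have hcasti : ((m + 1 : ℕ) : ZMod p) = i := by
        rw [← hm]; exact ZMod.natCast_rightInverse i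
      have hsub : i - 1 = ((m : ℕ) : ZMod p) := by
        rw [← hcasti]; push_cast; ring
      have hBi : B i = (yc i)⁻¹ * s i * bChain yc s m := by
        simp only [B_def]
        rw [hm, bChain, hcasti]
      have hBi1 : B (i - 1) = bChain yc s m := by
        simp only [B_def]
        rw [hsub, ZMod.val_cast_of_lt (by omega : m < p)]
      rw [hBi, hBi1]
      group
    have hB0 : B 0 = 1 := by
      simp only [B_def]
      rw [ZMod.val_zero]
      rfl
    have hBneg : B (0 - 1 : ZMod p) = (⁅w', z'⁆)⁻¹ * h₂ := by
      have hv : ((0 - 1 : ZMod p)).val = p - 1 := by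
        rw [zero_sub]
        have hm1 : (-1 : ZMod p) = ((p - 1 : ℕ) : ZMod p) := by
          rw [Nat.cast_sub (by omega : 1 ≤ p), ZMod.natCast_self, Nat.cast_one]
          ring
        rw [hm1, ZMod.val_cast_of_lt (by omega : p - 1 < p)]
      have hc2 : ((p - 2 + 1 : ℕ) : ZMod p) = -1 := by
        rw [show p - 2 + 1 = p - 1 from by omega,
          Nat.cast_sub (by omega : 1 ≤ p), ZMod.natCast_self, Nat.cast_one]
        ring
      simp only [B_def]
      rw [hv, show p - 1 = (p - 2) + 1 from by omega, bChain, hc2,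
        hchainEq (p - 2) le_rfl, hycm1, h2_def,
        show p - 1 = (p - 2) + 1 from by omega, prodUpTo, hc2]
      group
    have persec : ∀ i : ZMod p, E n (yc i * B i * (B (i - 1))⁻¹) (s i) := by
      intro i
      by_cases hi : i = 0
      · subst hi
        rw [hB0, hBneg, hyc0]
        have hconj : ⁅w', z'⁆ = h₂ * ⁅w, z⁆ * h₂⁻¹ := by
          rw [w'_def, z'_def]
          simp only [commutatorElement_def]
          group
        have key : ⁅u, v⁆ * 1 * ((⁅w', z'⁆)⁻¹ * h₂)⁻¹ = (⁅u, v⁆ * ⁅w, z⁆) * h₂⁻¹ := by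
          rw [hconj]
          group
        rw [key]
        have e2 := E_mul (tri_mul (tri_comm htu htv) (tri_comm htw htz)) he
          (E_refl n h₂⁻¹)
        have e3 : (s 0 * h₂) * h₂⁻¹ = s 0 := by group
        rwa [e3] at e2
      · rw [hBsucc i hi]
        exact E_refl n (s i)
    refine ⟨basePerm U0, basePerm V0, basePerm B, sigmaPerm p,
      tri_base hU0, tri_base hV0, tri_base hB, tri_sigma, ?_⟩
    intro x k hk
    have hLHS : (⁅basePerm U0, basePerm V0⁆ * ⁅basePerm B, sigmaPerm p⁆) x
        = consSeq (x 0) ((yc (x 0) * B (x 0) * (B (x 0 - 1))⁻¹) (tailSeq x)) := by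
      have hA : ⁅basePerm B, sigmaPerm p⁆ x
          = consSeq (x 0) ((B (x 0) * (B (x 0 - 1))⁻¹) (tailSeq x)) := by
        rw [commutatorElement_def, Equiv.Perm.mul_apply, Equiv.Perm.mul_apply,
          Equiv.Perm.mul_apply, sigmaPerm_inv_apply, basePerm_inv_apply, consSeq_zero,
          tailSeq_consSeq, sigmaPerm_apply, consSeq_zero, tailSeq_consSeq,
          show x 0 - 1 + 1 = x 0 from by ring, basePerm_apply, consSeq_zero, tailSeq_consSeq]
        simp only [Equiv.Perm.mul_apply]
      rw [Equiv.Perm.mul_apply, hA, basePerm_commutator, basePerm_apply, consSeq_zero,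
        tailSeq_consSeq]
      simp only [yc_def, Equiv.Perm.mul_apply]
    cases k with
    | zero =>
      rw [hLHS, consSeq_zero]
      exact (h0 x).symm
    | succ m =>
      rw [hLHS, consSeq_succ]
      have hR : g x (m + 1) = s (x 0) (tailSeq x) m := (sec_spec h0 x m).symm
      rw [hR]
      exact persec (x 0) (tailSeq x) m (by omega)

end Kal

namespace Kal

variable {p : ℕ}

lemma E_commutator {n : ℕ} {a b a' b' : Equiv.Perm (ℕ → ZMod p)}
    (ha : IsTriangular p a) (hb : IsTriangular p b)
    (ha' : IsTriangular p a') (hb' : IsTriangular p b')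
    (ea : E n a a') (eb : E n b b') : E n ⁅a, b⁆ ⁅a', b'⁆ := by
  rw [commutatorElement_def, commutatorElement_def]
  exact E_mul (tri_mul (tri_mul ha hb) (tri_inv ha))
    (E_mul (tri_mul ha hb) (E_mul ha ea eb) (E_inv ha' ea)) (E_inv hb' eb)

abbrev tabQuad (p : ℕ) (k : ℕ) :=
  ((Fin k → ZMod p) → ZMod p) × ((Fin k → ZMod p) → ZMod p) ×
    ((Fin k → ZMod p) → ZMod p) × ((Fin k → ZMod p) → ZMod p)

noncomputable def quadU (y : ∀ k, tabQuad p k) : Equiv.Perm (ℕ → ZMod p) :=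
  tabPerm (fun k => (y k).1)
noncomputable def quadV (y : ∀ k, tabQuad p k) : Equiv.Perm (ℕ → ZMod p) :=
  tabPerm (fun k => (y k).2.1)
noncomputable def quadW (y : ∀ k, tabQuad p k) : Equiv.Perm (ℕ → ZMod p) :=
  tabPerm (fun k => (y k).2.2.1)
noncomputable def quadZ (y : ∀ k, tabQuad p k) : Equiv.Perm (ℕ → ZMod p) :=
  tabPerm (fun k => (y k).2.2.2)

theorem ker_le_commutator [NeZero p] (hp2 : 2 ≤ p) {g : Equiv.Perm (ℕ → ZMod p)}
    (hg : IsTriangular p g) (hα : ∀ n, alphaKal p g n = 0) :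
    ∃ u v w z : Equiv.Perm (ℕ → ZMod p), IsTriangular p u ∧ IsTriangular p v ∧
      IsTriangular p w ∧ IsTriangular p z ∧ g = ⁅u, v⁆ * ⁅w, z⁆ := by
  letI : ∀ k, TopologicalSpace (tabQuad p k) := fun _ => ⊥
  haveI : ∀ k, DiscreteTopology (tabQuad p k) := fun _ => ⟨rfl⟩
  set C : ℕ → Set (∀ k, tabQuad p k) :=
    fun n => {y | E n (⁅quadU y, quadV y⁆ * ⁅quadW y, quadZ y⁆) g} with C_def
  have hCne : ∀ n, (C n).Nonempty := by
    intro n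
    obtain ⟨u, v, w, z, hu, hv, hw, hz, he⟩ := step hp2 n g hg (fun k _ => hα k)
    obtain ⟨au, hau⟩ := hu
    obtain ⟨av, hav⟩ := hv
    obtain ⟨aw, haw⟩ := hw
    obtain ⟨az, haz⟩ := hz
    refine ⟨fun k => (au k, av k, aw k, az k), ?_⟩
    show E n (⁅quadU _, quadV _⁆ * ⁅quadW _, quadZ _⁆) g
    have h1 : quadU (fun k => (au k, av k, aw k, az k)) = u := (eq_tabPerm au hau).symm
    have h2 : quadV (fun k => (au k, av k, aw k, az k)) = v := (eq_tabPerm av hav).symm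
    have h3 : quadW (fun k => (au k, av k, aw k, az k)) = w := (eq_tabPerm aw haw).symm
    have h4 : quadZ (fun k => (au k, av k, aw k, az k)) = z := (eq_tabPerm az haz).symm
    rw [h1, h2, h3, h4]
    exact he
  have hCinv : ∀ n (y y' : ∀ k, tabQuad p k), (∀ k, k < n → y k = y' k) →
      y ∈ C n → y' ∈ C n := by
    intro n y y' hagree hy
    have eU : E n (quadU y') (quadU y) :=
      E_tabPerm (fun k hk => (congrArg Prod.fst (hagree k hk)).symm)
    have eV : E n (quadV y') (quadV y) :=
      E_tabPerm (fun k hk => (congrArg (fun q => q.2.1) (hagree k hk)).symm)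
    have eW : E n (quadW y') (quadW y) :=
      E_tabPerm (fun k hk => (congrArg (fun q => q.2.2.1) (hagree k hk)).symm)
    have eZ : E n (quadZ y') (quadZ y) :=
      E_tabPerm (fun k hk => (congrArg (fun q => q.2.2.2) (hagree k hk)).symm)
    have e1 : E n (⁅quadU y', quadV y'⁆ * ⁅quadW y', quadZ y'⁆)
        (⁅quadU y, quadV y⁆ * ⁅quadW y, quadZ y⁆) :=
      E_mul (tri_comm (tri_tabPerm _) (tri_tabPerm _))
        (E_commutator (tri_tabPerm _) (tri_tabPerm _) (tri_tabPerm _) (tri_tabPerm _) eU eV)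
        (E_commutator (tri_tabPerm _) (tri_tabPerm _) (tri_tabPerm _) (tri_tabPerm _) eW eZ)
    exact E_trans e1 hy
  have hCclosed : ∀ n, IsClosed (C n) := by
    intro n
    have hπcont : Continuous (fun (y : ∀ k, tabQuad p k) (k : Fin n) => y (k : ℕ)) :=
      continuous_pi (fun k => continuous_apply _)
    have hCeq : C n = (fun (y : ∀ k, tabQuad p k) (k : Fin n) => y (k : ℕ)) ⁻¹'
        ((fun (y : ∀ k, tabQuad p k) (k : Fin n) => y (k : ℕ)) '' (C n)) := by
      apply Set.Subset.antisymm (Set.subset_preimage_image _ _)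
      intro y hy
      obtain ⟨y', hy', heq⟩ := hy
      exact hCinv n y' y (fun k hk => congrFun heq ⟨k, hk⟩) hy'
    rw [hCeq]
    exact (isClosed_discrete _).preimage hπcont
  have hdir : Directed (· ⊇ ·) C := by
    intro a b
    exact ⟨max a b, fun y hy => E_mono (le_max_left a b) hy,
      fun y hy => E_mono (le_max_right a b) hy⟩
  obtain ⟨y, hy⟩ := IsCompact.nonempty_iInter_of_directed_nonempty_isCompact_isClosed
    C hdir hCne (fun n => (hCclosed n).isCompact) hCclosed
  rw [Set.mem_iInter] at hy
  refine ⟨quadU y, quadV y, quadW y, quadZ y, tri_tabPerm _, tri_tabPerm _,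
    tri_tabPerm _, tri_tabPerm _, ?_⟩
  refine Equiv.ext fun x => funext fun k => ?_
  exact ((hy (k + 1)) x k (Nat.lt_succ_self k)).symm

end Kal

/-- the triangular permutations of `(ZMod p)^ℕ` form a subgroup `K_p` of the
permutation group, and `α : g ↦ (α_0(g), α_1(g), …)` is a surjective group homomorphism
from `K_p` onto the (additive, written multiplicatively) group of all sequences over
`ZMod p` whose kernel is the commutator subgroup of `K_p`; hence `α` is the abelianization
epimorphism `K_p → K_p/[K_p, K_p] ≅ (ZMod p)^ℕ`. -/
theorem alphaKal_abelianization (p : ℕ) (hp : p.Prime) [NeZero p] :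
    ∃ H : Subgroup (Equiv.Perm (ℕ → ZMod p)),
      (H : Set (Equiv.Perm (ℕ → ZMod p))) = {g | IsTriangular p g} ∧
      ∃ α : H →* Multiplicative (ℕ → ZMod p),
        (∀ (g : H) (n : ℕ),
          Multiplicative.toAdd (α g) n = alphaKal p (g : Equiv.Perm (ℕ → ZMod p)) n) ∧
        Function.Surjective α ∧
        α.ker = commutator H := by
  classical
  refine ⟨Kal.Kgrp p, rfl, ?_⟩
  set hom : (Kal.Kgrp p) →* Multiplicative (ℕ → ZMod p) :=
    { toFun := fun g =>
        Multiplicative.ofAdd (fun n => alphaKal p (g : Equiv.Perm (ℕ → ZMod p)) n)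
      map_one' := by
        have h1 : (fun n => alphaKal p ((1 : Kal.Kgrp p) : Equiv.Perm (ℕ → ZMod p)) n)
            = (0 : ℕ → ZMod p) := funext fun n => Kal.alphaKal_one n
        show Multiplicative.ofAdd _ = 1
        rw [h1]
        rfl
      map_mul' := by
        intro g h
        show Multiplicative.ofAdd _ = Multiplicative.ofAdd _ * Multiplicative.ofAdd _
        rw [← ofAdd_add]
        congr 1
        funext n
        show alphaKal p ((g : Equiv.Perm (ℕ → ZMod p)) * (h : Equiv.Perm (ℕ → ZMod p))) n
          = alphaKal p (g : Equiv.Perm (ℕ → ZMod p)) n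
            + alphaKal p (h : Equiv.Perm (ℕ → ZMod p)) n
        exact Kal.alphaKal_mul g.2 h.2 n } with hom_def
  refine ⟨hom, fun g n => rfl, ?_, ?_⟩
  · -- surjectivity
    intro s
    set f : ℕ → ZMod p := Multiplicative.toAdd s with f_def
    set a : (n : ℕ) → (Fin n → ZMod p) → ZMod p :=
      fun n v => if v = 0 then f n else 0 with a_def
    refine ⟨⟨Kal.tabPerm a, Kal.tri_tabPerm a⟩, ?_⟩
    show Multiplicative.ofAdd (fun n => alphaKal p (Kal.tabPerm a) n) = s
    have h1 : ∀ n, alphaKal p (Kal.tabPerm a) n = f n := by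
      intro n
      rw [Kal.alphaKal_eq_sum a (fun _ _ => rfl) n]
      simp [a_def]
    have h2 : (fun n => alphaKal p (Kal.tabPerm a) n) = f := funext h1
    rw [h2, f_def]
    exact ofAdd_toAdd s
  · -- kernel = commutator
    apply le_antisymm
    · intro g hgk
      have h2 : hom g = 1 := MonoidHom.mem_ker.mp hgk
      have hα : ∀ n, alphaKal p (g : Equiv.Perm (ℕ → ZMod p)) n = 0 := fun n =>
        congrFun (congrArg Multiplicative.toAdd h2) n
      obtain ⟨u, v, w, z, hu, hv, hw, hz, heq⟩ :=
        Kal.ker_le_commutator hp.two_le g.2 hα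
      have hg_eq : g = ⁅(⟨u, hu⟩ : Kal.Kgrp p), (⟨v, hv⟩ : Kal.Kgrp p)⁆
          * ⁅(⟨w, hw⟩ : Kal.Kgrp p), (⟨z, hz⟩ : Kal.Kgrp p)⁆ := by
        apply Subtype.ext
        have hcoe : ((⁅(⟨u, hu⟩ : Kal.Kgrp p), (⟨v, hv⟩ : Kal.Kgrp p)⁆
            * ⁅(⟨w, hw⟩ : Kal.Kgrp p), (⟨z, hz⟩ : Kal.Kgrp p)⁆ : Kal.Kgrp p) :
              Equiv.Perm (ℕ → ZMod p)) = ⁅u, v⁆ * ⁅w, z⁆ := rfl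
        rw [hcoe]
        exact heq
      rw [hg_eq, commutator_def]
      exact Subgroup.mul_mem _
        (Subgroup.commutator_mem_commutator (Subgroup.mem_top _) (Subgroup.mem_top _))
        (Subgroup.commutator_mem_commutator (Subgroup.mem_top _) (Subgroup.mem_top _))
    · exact Abelianization.commutator_subset_ker hom
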